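/- Let I ⊆ ℂ[z_1,…,z_d] be a zero-dimensional homogeneous ideal (i.e., its affine variety V(I) is finite, hence equal to {0}). Then I has finite codimension as a linear subspace of ℂ[z_1,…,z_d], and consequently I has the stable division property with respect to the H² norm. -/

import Mathlib

open MvPolynomial Finset

noncomputable section

/-- The ℓ¹ norm of a polynomial: the sum of absolute values of its coefficients. -/
def l1 {d : ℕ} (p : MvPolynomial (Fin d) ℂ) : ℝ :=
  ∑ α ∈ p.support, ‖p.coeff α‖

/-- total degree |α| of a multi-index -/
def mdeg {d : ℕ} (α : Fin d →₀ ℕ) : ℕ := α.sum fun _ n => n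

/-- Drury–Arveson weight  α!/|α|! -/
def daW {d : ℕ} (α : Fin d →₀ ℕ) : ℝ :=
  (∏ i, Nat.factorial (α i)) / Nat.factorial (mdeg α)

/-- Drury–Arveson inner product on polynomials -/
def daInner {d : ℕ} (p q : MvPolynomial (Fin d) ℂ) : ℂ :=
  ∑ α ∈ p.support ∪ q.support, (starRingEnd ℂ) (p.coeff α) * q.coeff α * (daW α : ℂ)

/-- Drury–Arveson squared norm -/
def daNormSq {d : ℕ} (p : MvPolynomial (Fin d) ℂ) : ℝ :=
  ∑ α ∈ p.support, ‖p.coeff α‖ ^ 2 * daW α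

/-- vector valued versions -/
def vInner {d r : ℕ} (p q : Fin r → MvPolynomial (Fin d) ℂ) : ℂ := ∑ t, daInner (p t) (q t)

def vNormSq {d r : ℕ} (p : Fin r → MvPolynomial (Fin d) ℂ) : ℝ := ∑ t, daNormSq (p t)

def vNorm {d r : ℕ} (p : Fin r → MvPolynomial (Fin d) ℂ) : ℝ := Real.sqrt (vNormSq p)

def vHomog {d r : ℕ} (p : Fin r → MvPolynomial (Fin d) ℂ) (n : ℕ) : Prop :=
  ∀ t, (p t).IsHomogeneous n

/-! ### Auxiliary lemmas -/

section Aux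

variable {d : ℕ}

lemma daW_pos (α : Fin d →₀ ℕ) : 0 < daW α := by
  apply div_pos
  · positivity
  · exact_mod_cast Nat.cast_pos.mpr (Nat.factorial_pos _)

lemma daNormSq_eq_sum (p : MvPolynomial (Fin d) ℂ) {T : Finset (Fin d →₀ ℕ)}
    (hT : p.support ⊆ T) :
    daNormSq p = ∑ α ∈ T, ‖p.coeff α‖ ^ 2 * daW α := by
  refine Finset.sum_subset hT fun α _ hα => ?_
  rw [MvPolynomial.notMem_support_iff.mp hα]
  simp

lemma daInner_eq_sum (p q : MvPolynomial (Fin d) ℂ) {T : Finset (Fin d →₀ ℕ)}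
    (hT : p.support ∪ q.support ⊆ T) :
    daInner p q = ∑ α ∈ T, (starRingEnd ℂ) (p.coeff α) * q.coeff α * (daW α : ℂ) := by
  refine Finset.sum_subset hT fun α _ hα => ?_
  simp only [Finset.mem_union, not_or] at hα
  rw [MvPolynomial.notMem_support_iff.mp hα.1]
  simp

lemma daInner_self (p : MvPolynomial (Fin d) ℂ) : daInner p p = (daNormSq p : ℂ) := by
  rw [daInner, Finset.union_self, daNormSq]
  push_cast
  refine Finset.sum_congr rfl fun α _ => ?_
  rw [mul_comm ((starRingEnd ℂ) _), Complex.mul_conj']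

lemma daNormSq_nonneg (p : MvPolynomial (Fin d) ℂ) : 0 ≤ daNormSq p := by
  refine Finset.sum_nonneg fun α _ => ?_
  have := (daW_pos α).le
  positivity

lemma daNormSq_eq_zero {p : MvPolynomial (Fin d) ℂ} (h : daNormSq p = 0) : p = 0 := by
  rw [daNormSq, Finset.sum_eq_zero_iff_of_nonneg
    (fun α _ => by have := (daW_pos α).le; positivity)] at h
  ext α
  by_cases hα : α ∈ p.support
  · have := h α hα
    have hw := (daW_pos α).ne'
    have : ‖p.coeff α‖ ^ 2 = 0 := by
      rcases mul_eq_zero.mp this with h' | h'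
      · exact h'
      · exact absurd h' hw
    have h2 : ‖p.coeff α‖ = 0 := pow_eq_zero_iff (n := 2) (by norm_num) |>.mp this
    simpa using norm_eq_zero.mp h2
  · simpa using MvPolynomial.notMem_support_iff.mp hα

lemma daInner_conj_symm (p q : MvPolynomial (Fin d) ℂ) :
    (starRingEnd ℂ) (daInner q p) = daInner p q := by
  rw [daInner, daInner, Finset.union_comm, map_sum]
  refine Finset.sum_congr rfl fun α _ => ?_
  simp only [map_mul, Complex.conj_conj, Complex.conj_ofReal]
  ring

lemma daInner_add_left (p q r : MvPolynomial (Fin d) ℂ) :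
    daInner (p + q) r = daInner p r + daInner q r := by
  have h1 : (p + q).support ∪ r.support ⊆ (p.support ∪ q.support) ∪ r.support :=
    Finset.union_subset_union_left (MvPolynomial.support_add)
  rw [daInner_eq_sum _ _ h1,
    daInner_eq_sum p r (Finset.union_subset_union_left Finset.subset_union_left),
    daInner_eq_sum q r (Finset.union_subset_union_left Finset.subset_union_right),
    ← Finset.sum_add_distrib]
  refine Finset.sum_congr rfl fun α _ => ?_
  rw [MvPolynomial.coeff_add, map_add]
  ring

lemma daInner_smul_left (p q : MvPolynomial (Fin d) ℂ) (r : ℂ) :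
    daInner (r • p) q = (starRingEnd ℂ) r * daInner p q := by
  have h1 : (r • p).support ∪ q.support ⊆ p.support ∪ q.support :=
    Finset.union_subset_union_left (MvPolynomial.support_smul)
  rw [daInner_eq_sum _ _ h1, daInner, Finset.mul_sum]
  refine Finset.sum_congr rfl fun α _ => ?_
  rw [MvPolynomial.coeff_smul, smul_eq_mul, map_mul]
  ring

lemma daNormSq_smul (p : MvPolynomial (Fin d) ℂ) (r : ℂ) :
    daNormSq (r • p) = ‖r‖ ^ 2 * daNormSq p := by
  have h : (r • p).support ⊆ p.support := MvPolynomial.support_smul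
  rw [show daNormSq (r • p) = ∑ α ∈ p.support, ‖(r • p).coeff α‖ ^ 2 * daW α from
    Finset.sum_subset h (fun α _ hα => by rw [MvPolynomial.notMem_support_iff.mp hα]; simp),
    daNormSq, Finset.mul_sum]
  refine Finset.sum_congr rfl fun α _ => ?_
  rw [MvPolynomial.coeff_smul, smul_eq_mul, norm_mul, mul_pow]
  ring

/-- The Drury–Arveson inner-product core structure. -/
def daCore (d : ℕ) : InnerProductSpace.Core ℂ (MvPolynomial (Fin d) ℂ) where
  toInner := ⟨daInner⟩
  conj_inner_symm := daInner_conj_symm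
  re_inner_nonneg := fun p => by
    change (0:ℝ) ≤ RCLike.re (daInner p p)
    rw [daInner_self]
    simpa using daNormSq_nonneg p
  add_left := daInner_add_left
  smul_left := daInner_smul_left
  definite := fun p hp => by
    have hp' : daInner p p = 0 := hp
    rw [daInner_self] at hp'
    exact daNormSq_eq_zero (by exact_mod_cast hp')

/-- restriction of a polynomial to a set of multi-indices -/
def restr (h : MvPolynomial (Fin d) ℂ) (S : Finset (Fin d →₀ ℕ)) : MvPolynomial (Fin d) ℂ :=
  ∑ α ∈ S, monomial α (h.coeff α)

lemma coeff_restr (h : MvPolynomial (Fin d) ℂ) (S : Finset (Fin d →₀ ℕ)) (β : Fin d →₀ ℕ) :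
    (restr h S).coeff β = if β ∈ S then h.coeff β else 0 := by
  rw [restr, MvPolynomial.coeff_sum]
  simp only [MvPolynomial.coeff_monomial]
  rw [Finset.sum_ite_eq' S β (fun α => h.coeff α)]

lemma support_restr {h : MvPolynomial (Fin d) ℂ} {S : Finset (Fin d →₀ ℕ)}
    (hS : S ⊆ h.support) : (restr h S).support = S := by
  ext β
  rw [MvPolynomial.mem_support_iff, coeff_restr]
  constructor
  · intro hb; by_contra hc; simp [hc] at hb
  · intro hb
    simp only [hb, if_true]
    exact MvPolynomial.mem_support_iff.mp (hS hb)

lemma daNormSq_restr {h : MvPolynomial (Fin d) ℂ} {S : Finset (Fin d →₀ ℕ)}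
    (hS : S ⊆ h.support) :
    daNormSq (restr h S) = ∑ α ∈ S, ‖h.coeff α‖ ^ 2 * daW α := by
  rw [daNormSq, support_restr hS]
  refine Finset.sum_congr rfl fun α hα => ?_
  rw [coeff_restr, if_pos hα]

lemma restr_support_eq (h : MvPolynomial (Fin d) ℂ) : restr h h.support = h :=
  MvPolynomial.support_sum_monomial_coeff h

lemma restr_filter_add (h : MvPolynomial (Fin d) ℂ) (S : Finset (Fin d →₀ ℕ))
    (P : (Fin d →₀ ℕ) → Prop) [DecidablePred P] :
    restr h (S.filter P) + restr h (S.filter fun α => ¬ P α) = restr h S := by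
  rw [restr, restr, restr, Finset.sum_filter_add_sum_filter_not]

lemma mdeg_eq_sum (α : Fin d →₀ ℕ) : mdeg α = ∑ i, α i :=
  Finsupp.sum_fintype _ _ (fun _ => rfl)

lemma eval_smul_homog {g : MvPolynomial (Fin d) ℂ} {n : ℕ} (hg : g.IsHomogeneous n)
    (c : ℂ) (x : Fin d → ℂ) : eval (c • x) g = c ^ n * eval x g := by
  rw [eval_eq', eval_eq', Finset.mul_sum]
  refine Finset.sum_congr rfl fun α hα => ?_
  have hdeg : ∑ i, α i = n := by
    have h1 := hg (MvPolynomial.mem_support_iff.mp hα)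
    change Finsupp.weight (fun _ => 1) α = n at h1
    rw [← Finsupp.degree_eq_weight_one] at h1
    rw [← h1, Finsupp.degree]
    exact (Finset.sum_subset (Finset.subset_univ _) (fun i _ hi => by
      simpa using Finsupp.notMem_support_iff.mp hi)).symm
  have : ∀ i : Fin d, (c • x) i = c * x i := fun i => rfl
  simp only [this, mul_pow, Finset.prod_mul_distrib, Finset.prod_pow_eq_pow_sum, hdeg]
  ring

lemma exists_pow_X_mem (I : Ideal (MvPolynomial (Fin d) ℂ))
    (hhom : ∃ S : Set (MvPolynomial (Fin d) ℂ),
      (∀ f ∈ S, ∃ n, f.IsHomogeneous n) ∧ I = Ideal.span S)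
    (hfin : {x : Fin d → ℂ | ∀ f ∈ I, eval x f = 0}.Finite) :
    ∃ M : ℕ, ∀ i : Fin d, (X i : MvPolynomial (Fin d) ℂ) ^ M ∈ I := by
  obtain ⟨S, hS, hspan⟩ := hhom
  have hzl : MvPolynomial.zeroLocus ℂ I ⊆ {0} := by
    intro x hx
    by_contra hx0
    have hx0' : x ≠ 0 := by simpa using hx0
    have hmem : ∀ c : ℂ, (c • x) ∈ {x : Fin d → ℂ | ∀ f ∈ I, eval x f = 0} := by
      intro c f hf
      rw [hspan] at hf
      refine Submodule.span_induction (p := fun f _ => eval (c • x) f = 0) ?_ ?_ ?_ ?_ hf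
      · intro g hg
        obtain ⟨n, hn⟩ := hS g hg
        rw [eval_smul_homog hn]
        have : eval x g = 0 := hx g (hspan ▸ Ideal.subset_span hg)
        rw [this, mul_zero]
      · simp
      · intro a b _ _ ha hb; rw [map_add, ha, hb, add_zero]
      · intro a b _ hb
        rw [smul_eq_mul, map_mul, hb, mul_zero]
    exact hfin.not_infinite
      (Set.infinite_of_injective_forall_mem (smul_left_injective ℂ hx0') hmem)
  have hXrad : ∀ i : Fin d, (X i : MvPolynomial (Fin d) ℂ) ∈ I.radical := by
    intro i
    rw [← MvPolynomial.vanishingIdeal_zeroLocus_eq_radical (K := ℂ),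
      MvPolynomial.mem_vanishingIdeal_iff]
    intro x hx
    have : x = 0 := hzl hx
    simp [this]
  choose n hn using fun i => hXrad i
  refine ⟨∑ i, n i, fun i => ?_⟩
  have hle : n i ≤ ∑ j, n j := Finset.single_le_sum (fun j _ => Nat.zero_le _) (Finset.mem_univ i)
  have : (X i : MvPolynomial (Fin d) ℂ) ^ (∑ j, n j)
      = X i ^ ((∑ j, n j) - n i) * X i ^ n i := by rw [← pow_add, Nat.sub_add_cancel hle]
  rw [this]
  exact Ideal.mul_mem_left _ _ (hn i)

lemma exists_big_index {M : ℕ} {α : Fin d →₀ ℕ} (hα : d * M + 1 ≤ mdeg α) :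
    ∃ j : Fin d, M ≤ α j := by
  by_contra hc
  push_neg at hc
  have h1 : ∑ i, (α i + 1) ≤ ∑ _i : Fin d, M := Finset.sum_le_sum (fun i _ => hc i)
  have h2 : mdeg α + d ≤ d * M := by
    rw [mdeg_eq_sum]
    simpa [Finset.sum_add_distrib, mul_comm] using h1
  omega

lemma monomial_mem_of_big {I : Ideal (MvPolynomial (Fin d) ℂ)} {M : ℕ}
    (hXM : ∀ i : Fin d, (X i : MvPolynomial (Fin d) ℂ) ^ M ∈ I)
    {α : Fin d →₀ ℕ} (hα : d * M + 1 ≤ mdeg α) (c : ℂ) :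
    (monomial α c : MvPolynomial (Fin d) ℂ) ∈ I := by
  obtain ⟨j, hj⟩ := exists_big_index hα
  have hsing : Finsupp.single j M ≤ α := Finsupp.single_le_iff.mpr hj
  have : (monomial α c : MvPolynomial (Fin d) ℂ)
      = monomial (α - Finsupp.single j M) c * X j ^ M := by
    rw [X_pow_eq_monomial, monomial_mul, mul_one, tsub_add_cancel_of_le hsing]
  rw [this]
  exact Ideal.mul_mem_left _ _ (hXM j)

lemma restr_mem_rtd {h : MvPolynomial (Fin d) ℂ} {S : Finset (Fin d →₀ ℕ)} {K : ℕ}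
    (hS : ∀ α ∈ S, mdeg α ≤ K) :
    restr h S ∈ restrictTotalDegree (Fin d) ℂ K := by
  rw [mem_restrictTotalDegree, MvPolynomial.totalDegree]
  refine Finset.sup_le fun β hβ => ?_
  have hβS : β ∈ S := by
    by_contra hc
    exact MvPolynomial.mem_support_iff.mp hβ (by rw [coeff_restr, if_neg hc])
  exact hS β hβS

end Aux

/-- a zero dimensional homogeneous ideal has finite codimension in
`ℂ[z_1,…,z_d]` and has the stable division property for the Drury–Arveson norm. -/
theorem stmt10 (d : ℕ) (I : Ideal (MvPolynomial (Fin d) ℂ))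
    (hhom : ∃ S : Set (MvPolynomial (Fin d) ℂ),
      (∀ f ∈ S, ∃ n, f.IsHomogeneous n) ∧ I = Ideal.span S)
    (hfin : {x : Fin d → ℂ | ∀ f ∈ I, eval x f = 0}.Finite) :
    FiniteDimensional ℂ (MvPolynomial (Fin d) ℂ ⧸ I) ∧
    ∃ (k : ℕ) (f : Fin k → MvPolynomial (Fin d) ℂ) (Cst : ℝ),
      Ideal.span (Set.range f) = I ∧
      ∀ h ∈ I, ∃ a : Fin k → MvPolynomial (Fin d) ℂ,
        h = ∑ i, a i * f i ∧ ∑ i, daNormSq (a i * f i) ≤ Cst * daNormSq h := by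
  obtain ⟨M, hXM⟩ := exists_pow_X_mem I hhom hfin
  -- any monomial of degree ≥ d*M+1 belongs to I
  have hmono := fun {α} hα c => monomial_mem_of_big (I := I) (M := M) hXM (α := α) hα c
  -- the high part of any polynomial lies in I
  have hhighI : ∀ p : MvPolynomial (Fin d) ℂ,
      restr p (p.support.filter fun α => d * M + 1 ≤ mdeg α) ∈ I := by
    intro p
    refine Submodule.sum_mem _ fun α hα => ?_
    exact hmono (Finset.mem_filter.mp hα).2 _
  -- finite codimension
  have hfd : FiniteDimensional ℂ (MvPolynomial (Fin d) ℂ ⧸ I) := by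
    let R := restrictTotalDegree (Fin d) ℂ (d * M)
    let φ : R →ₗ[ℂ] (MvPolynomial (Fin d) ℂ ⧸ I) :=
      (Ideal.Quotient.mkₐ ℂ I).toLinearMap.comp R.subtype
    have hsurj : Function.Surjective φ := by
      intro q
      obtain ⟨p, rfl⟩ := Ideal.Quotient.mk_surjective q
      have hmem : restr p (p.support.filter fun α => ¬ (d * M + 1 ≤ mdeg α)) ∈ R :=
        restr_mem_rtd fun α hα => by
          have := (Finset.mem_filter.mp hα).2; omega
      refine ⟨⟨_, hmem⟩, ?_⟩
      show Ideal.Quotient.mk I _ = Ideal.Quotient.mk I p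
      rw [Ideal.Quotient.eq]
      have hsplit := restr_filter_add p p.support (fun α => d * M + 1 ≤ mdeg α)
      rw [restr_support_eq] at hsplit
      have heq2 : restr p (p.support.filter fun α => ¬ (d * M + 1 ≤ mdeg α)) - p
          = -(restr p (p.support.filter fun α => d * M + 1 ≤ mdeg α)) := by
        linear_combination hsplit
      show restr p (p.support.filter fun α => ¬ (d * M + 1 ≤ mdeg α)) - p ∈ I
      rw [heq2]
      exact Submodule.neg_mem _ (hhighI p)
    exact Module.Finite.of_surjective φ hsurj
  refine ⟨hfd, ?_⟩
  -- set up the inner product space structure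
  letI : NormedAddCommGroup (MvPolynomial (Fin d) ℂ) := (daCore d).toNormedAddCommGroup
  letI : InnerProductSpace ℂ (MvPolynomial (Fin d) ℂ) := InnerProductSpace.ofCore (daCore d).toCore
  have hnorm : ∀ p : MvPolynomial (Fin d) ℂ, ‖p‖ ^ 2 = daNormSq p := by
    intro p
    rw [← inner_self_eq_norm_sq (𝕜 := ℂ),
      show (inner ℂ p p : ℂ) = daInner p p from rfl, daInner_self]
    simp
  -- the finite dimensional subspace V = I ∩ {deg ≤ d*M}
  let V := (Submodule.restrictScalars ℂ I) ⊓ restrictTotalDegree (Fin d) ℂ (d * M)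
  haveI : FiniteDimensional ℂ (restrictTotalDegree (Fin d) ℂ (d * M)) := inferInstance
  haveI : FiniteDimensional ℂ V :=
    Submodule.finiteDimensional_of_le (inf_le_right)
  let b := stdOrthonormalBasis ℂ V
  set m := Module.finrank ℂ V with hm
  -- case split on d
  rcases Nat.eq_zero_or_pos d with rfl | hd
  · -- d = 0 : polynomial ring is isomorphic to ℂ
    by_cases hI : I = ⊥
    · refine ⟨0, fun i => i.elim0, 1, ?_, ?_⟩
      · rw [show Set.range (fun i : Fin 0 => i.elim0 (α := MvPolynomial (Fin 0) ℂ)) = ∅ by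
          simp, Ideal.span_empty, hI]
      · intro h hh
        rw [hI, Ideal.mem_bot] at hh
        refine ⟨fun i => i.elim0, by simp [hh], ?_⟩
        simp [hh, daNormSq]
    · -- I = ⊤
      have hItop : I = ⊤ := by
        obtain ⟨p, hpI, hp0⟩ := Submodule.exists_mem_ne_zero_of_ne_bot hI
        let e := MvPolynomial.isEmptyAlgEquiv ℂ (Fin 0)
        have hep : e p ≠ 0 := fun hc => hp0 (by
          have := congrArg e.symm hc
          simpa using this)
        have h1 : (e.symm ((e p)⁻¹)) * p = 1 := by
          have : (e.symm ((e p)⁻¹)) * (e.symm (e p)) = e.symm 1 := by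
            rw [← map_mul, inv_mul_cancel₀ hep]
          simpa using this
        exact Ideal.eq_top_of_isUnit_mem I hpI (IsUnit.of_mul_eq_one _ (by rw [mul_comm] at h1; exact h1))
      refine ⟨1, fun _ => 1, 1, ?_, ?_⟩
      · rw [show Set.range (fun _ : Fin 1 => (1 : MvPolynomial (Fin 0) ℂ)) = {1} from
          Set.range_const, Ideal.span_singleton_one, hItop]
      · intro h hh
        refine ⟨fun _ => h, by simp, ?_⟩
        simp [Fin.sum_univ_one]
  · -- main case d > 0
    -- generators
    let flow : Fin m → MvPolynomial (Fin d) ℂ := fun i => (b i : MvPolynomial (Fin d) ℂ)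
    let fhigh : Fin d → MvPolynomial (Fin d) ℂ := fun j => X j ^ M
    let f := Fin.append flow fhigh
    have hflowI : ∀ i, flow i ∈ I := fun i => ((b i).2.1 : _)
    have hb1 : ∀ i, daNormSq (flow i) = 1 := by
      intro i
      have h1 : ‖b i‖ = 1 := b.orthonormal.1 i
      have h2 : ‖flow i‖ = 1 := h1
      rw [← hnorm, h2, one_pow]
    -- the division
    have hdiv : ∀ h ∈ I, ∃ a : Fin (m + d) → MvPolynomial (Fin d) ℂ,
        h = ∑ i, a i * f i ∧ ∑ i, daNormSq (a i * f i) ≤ 1 * daNormSq h := by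
      intro h hh
      set Shigh := h.support.filter (fun α => d * M + 1 ≤ mdeg α) with hShigh
      set Slow := h.support.filter (fun α => ¬ (d * M + 1 ≤ mdeg α)) with hSlow
      have hsplit : restr h Shigh + restr h Slow = h := by
        rw [hShigh, hSlow, restr_filter_add, restr_support_eq]
      have hhiI : restr h Shigh ∈ I := hhighI h
      have hloI : restr h Slow ∈ I := by
        have := I.sub_mem hh hhiI
        have heq : h - restr h Shigh = restr h Slow := by linear_combination -hsplit
        rwa [heq] at this
      have hlodeg : restr h Slow ∈ restrictTotalDegree (Fin d) ℂ (d * M) :=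
        restr_mem_rtd fun α hα => by have := (Finset.mem_filter.mp hα).2; omega
      let v : V := ⟨restr h Slow, ⟨hloI, hlodeg⟩⟩
      let c : Fin m → ℂ := fun i => b.repr v i
      have hv : ∑ i, c i • b i = v := b.sum_repr v
      have hlow_eq : restr h Slow = ∑ i, c i • flow i := by
        have h0 := congrArg (Subtype.val : V → MvPolynomial (Fin d) ℂ) hv
        rw [show ((∑ i, c i • b i : V) : MvPolynomial (Fin d) ℂ) = ∑ i, c i • flow i by
          push_cast; rfl] at h0
        exact h0.symm
      have hpars : ∑ i, ‖c i‖ ^ 2 = daNormSq (restr h Slow) := by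
        have h1 : ‖(v : MvPolynomial (Fin d) ℂ)‖ ^ 2 = daNormSq (restr h Slow) := hnorm _
        have h2 : ‖v‖ = ‖(v : MvPolynomial (Fin d) ℂ)‖ := rfl
        have h3 : ‖v‖ ^ 2 = ∑ i, ‖c i‖ ^ 2 := by
          rw [← b.repr.norm_map v, EuclideanSpace.norm_eq,
            Real.sq_sqrt (Finset.sum_nonneg fun i _ => sq_nonneg _)]
        calc ∑ i, ‖c i‖ ^ 2 = ∑ i, ‖c i‖ ^ 2 := by
              rfl
          _ = ‖v‖ ^ 2 := h3.symm
          _ = daNormSq (restr h Slow) := by rw [h2]; exact h1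
      -- the high part
      have hgex : ∀ α ∈ Shigh, ∃ j : Fin d, M ≤ α j := fun α hα =>
        exists_big_index (Finset.mem_filter.mp hα).2
      let g : (Fin d →₀ ℕ) → Fin d := fun α =>
        if hα : ∃ j : Fin d, M ≤ α j then hα.choose else ⟨0, hd⟩
      have hg : ∀ α ∈ Shigh, M ≤ α (g α) := by
        intro α hα
        have hex := hgex α hα
        simp only [g, dif_pos hex]
        exact hex.choose_spec
      let Sj : Fin d → Finset (Fin d →₀ ℕ) := fun j => Shigh.filter (fun α => g α = j)
      let ahigh : Fin d → MvPolynomial (Fin d) ℂ := fun j =>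
        ∑ α ∈ Sj j, monomial (α - Finsupp.single j M) (h.coeff α)
      have hprod : ∀ j, ahigh j * fhigh j = restr h (Sj j) := by
        intro j
        calc ahigh j * fhigh j
            = ∑ α ∈ Sj j, monomial (α - Finsupp.single j M) (h.coeff α) * (X j ^ M) :=
              Finset.sum_mul _ _ _
          _ = ∑ α ∈ Sj j, monomial α (h.coeff α) := by
              refine Finset.sum_congr rfl fun α hα => ?_
              have hα1 : α ∈ Shigh := (Finset.mem_filter.mp hα).1
              have hα2 : g α = j := (Finset.mem_filter.mp hα).2
              have hM : M ≤ α j := hα2 ▸ hg α hα1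
              rw [X_pow_eq_monomial, monomial_mul, mul_one,
                tsub_add_cancel_of_le (Finsupp.single_le_iff.mpr hM)]
          _ = restr h (Sj j) := rfl
      have hsum_high : ∑ j, ahigh j * fhigh j = restr h Shigh := by
        rw [show ∑ j, ahigh j * fhigh j = ∑ j, restr h (Sj j) from
          Finset.sum_congr rfl fun j _ => hprod j]
        exact Finset.sum_fiberwise Shigh g (fun α => monomial α (h.coeff α))
      have hSjsub : ∀ j, Sj j ⊆ h.support := fun j =>
        (Finset.filter_subset _ _).trans (Finset.filter_subset _ _)
      have hnorm_high : ∑ j, daNormSq (ahigh j * fhigh j)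
          = ∑ α ∈ Shigh, ‖h.coeff α‖ ^ 2 * daW α := by
        rw [show ∑ j, daNormSq (ahigh j * fhigh j)
            = ∑ j, ∑ α ∈ Sj j, ‖h.coeff α‖ ^ 2 * daW α from
          Finset.sum_congr rfl fun j _ => by rw [hprod j, daNormSq_restr (hSjsub j)]]
        exact Finset.sum_fiberwise Shigh g _
      -- the low part
      let alow : Fin m → MvPolynomial (Fin d) ℂ := fun i => MvPolynomial.C (c i)
      have hlowprod : ∀ i, alow i * flow i = c i • flow i := fun i => MvPolynomial.C_mul'
      have hnorm_low : ∑ i, daNormSq (alow i * flow i) = daNormSq (restr h Slow) := by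
        rw [show ∑ i, daNormSq (alow i * flow i) = ∑ i, ‖c i‖ ^ 2 from
          Finset.sum_congr rfl fun i _ => by
            rw [hlowprod i, daNormSq_smul, hb1 i, mul_one]]
        exact hpars
      have hsum_low : ∑ i, alow i * flow i = restr h Slow := by
        rw [show ∑ i, alow i * flow i = ∑ i, c i • flow i from
          Finset.sum_congr rfl fun i _ => hlowprod i]
        exact hlow_eq.symm
      -- assemble
      refine ⟨Fin.append alow ahigh, ?_, ?_⟩
      · rw [Fin.sum_univ_add]
        simp only [f, Fin.append_left, Fin.append_right]
        rw [hsum_low, hsum_high, add_comm]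
        exact hsplit.symm
      · rw [one_mul, Fin.sum_univ_add]
        simp only [f, Fin.append_left, Fin.append_right]
        rw [hnorm_low, hnorm_high]
        have hds : daNormSq h
            = (∑ α ∈ Shigh, ‖h.coeff α‖ ^ 2 * daW α)
              + (∑ α ∈ Slow, ‖h.coeff α‖ ^ 2 * daW α) := by
          rw [daNormSq, hShigh, hSlow]
          exact (Finset.sum_filter_add_sum_filter_not h.support
            (fun α => d * M + 1 ≤ mdeg α) _).symm
        rw [hds, show daNormSq (restr h Slow)
            = ∑ α ∈ Slow, ‖h.coeff α‖ ^ 2 * daW α from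
          daNormSq_restr (Finset.filter_subset _ _)]
        linarith
    refine ⟨m + d, f, 1, ?_, hdiv⟩
    apply le_antisymm
    · rw [Ideal.span_le]
      rintro x ⟨i, rfl⟩
      induction i using Fin.addCases with
      | left i =>
        have : f (Fin.castAdd d i) = flow i := Fin.append_left _ _ _
        rw [this]
        exact hflowI i
      | right j =>
        have : f (Fin.natAdd m j) = fhigh j := Fin.append_right _ _ _
        rw [this]
        exact hXM j
    · intro x hx
      obtain ⟨a, ha, _⟩ := hdiv x hx
      rw [ha]
      exact Ideal.sum_mem _ fun i _ => Ideal.mul_mem_left _ _ (Ideal.subset_span ⟨i, rfl⟩)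

end
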